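/- arXiv:2306.00321 — 5 statements merged into one kernel-verified Lean document; each statement's English description precedes it below -/
import Mathlib

section
/- Let M = (S, A, P, r, γ) be an MDP with finite state space S, discount γ ∈ [0,1), and bounded rewards. Let λ: S × S → [0,1] and h: S → ℝ be bounded functions, and define the reshaped MDP with reward r̃(s,a) = r(s,a) + γ E_{s'∼P(·|s,a)}[λ(s,s') h(s')] and transition-dependent discount γ̃(s,s') = γ(1−λ(s,s')). For any policy π, letting V^π be its value in M and Ṽ^π its value in the reshaped MDP, and d^π(s,a,s'; s₀) the (unnormalized by (1−γ)) discounted state-action-next-state occupancy of π started at s₀, we have V^π(s₀) − Ṽ^π(s₀) = (γ/(1−γ)) E_{(s,a,s')∼d^π}[ λ(s,s') (Ṽ^π(s') − h(s')) ]. -/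
/-- HUBL value-difference identity (Lemma `extended mdp`).
Finite state space `S`, action space `A`, transition kernel `P`, stochastic
policy `π`, reward `r`, discount `γ ∈ [0,1)`, blending `λ' : S × S → [0,1]`,
heuristic `h`. `ρ t` is the state distribution at time `t` of `π` started at
`s₀`, `V` the value of `π` in the original MDP, `Vt` its value in the reshaped
MDP (reward `r̃(s,a) = r(s,a) + γ E_{s'}[λ'(s,s') h(s')]`, discount
`γ̃(s,s') = γ(1−λ'(s,s'))`).  Then
`V s₀ − Vt s₀ = (γ/(1−γ)) · E_{(s,a,s')∼d^π}[λ'(s,s')(Vt s' − h s')]`, where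
`E_{d^π}[f] = (1−γ) Σ_t γ^t E[f(s_t,a_t,s_{t+1})]`. -/
theorem hubl_value_difference
    {S A : Type*} [Fintype S] [Fintype A] [DecidableEq S]
    (P : S → A → S → ℝ) (π : S → A → ℝ) (r : S → A → ℝ)
    (γ : ℝ) (hγ0 : 0 ≤ γ) (hγ1 : γ < 1)
    (lam : S → S → ℝ) (hlam : ∀ s s', lam s s' ∈ Set.Icc (0 : ℝ) 1)
    (h : S → ℝ)
    (hPnn : ∀ s a s', 0 ≤ P s a s') (hPsum : ∀ s a, ∑ s', P s a s' = 1)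
    (hπnn : ∀ s a, 0 ≤ π s a) (hπsum : ∀ s, ∑ a, π s a = 1)
    (s₀ : S) (ρ : ℕ → S → ℝ)
    (hρ0 : ∀ s, ρ 0 s = if s = s₀ then 1 else 0)
    (hρ : ∀ t s', ρ (t + 1) s' = ∑ s, ∑ a, ρ t s * π s a * P s a s')
    (V Vt : S → ℝ)
    (hV : ∀ s, V s = ∑ a, π s a * (r s a + γ * ∑ s', P s a s' * V s'))
    (hVt : ∀ s, Vt s = ∑ a, π s a * ∑ s', P s a s' *
      (r s a + γ * lam s s' * h s' + γ * (1 - lam s s') * Vt s')) :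
    V s₀ - Vt s₀ =
      (γ / (1 - γ)) * ((1 - γ) * ∑' t : ℕ, γ ^ t *
        ∑ s, ∑ a, ∑ s', ρ t s * π s a * P s a s' *
          (lam s s' * (Vt s' - h s'))) := by
  set Δ : S → ℝ := fun s => V s - Vt s with hΔ
  set g : S → ℝ := fun s => γ * ∑ a, π s a * ∑ s', P s a s' *
      (lam s s' * (Vt s' - h s')) with hg
  -- Bellman recursion for Δ
  have step : ∀ s, Δ s = g s + γ * ∑ a, π s a * ∑ s', P s a s' * Δ s' := by
    intro s
    have h1 : ∀ a, r s a + γ * ∑ s', P s a s' * V s'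
        = ∑ s', P s a s' * (r s a + γ * V s') := by
      intro a
      rw [Finset.sum_congr rfl (fun s' _ => mul_add (P s a s') (r s a) (γ * V s')),
        Finset.sum_add_distrib, ← Finset.sum_mul, hPsum, one_mul]
      congr 1
      rw [Finset.mul_sum]
      exact Finset.sum_congr rfl fun s' _ => by ring
    simp only [hΔ, hg, hV s, hVt s, ← Finset.sum_sub_distrib, Finset.mul_sum,
      ← Finset.sum_add_distrib]
    refine Finset.sum_congr rfl fun a _ => ?_
    have hr : π s a * r s a = ∑ s', π s a * (P s a s' * r s a) := by
      rw [← Finset.mul_sum, ← Finset.sum_mul, hPsum, one_mul]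
    rw [mul_add, hr, Finset.mul_sum, ← Finset.sum_add_distrib, ← Finset.sum_sub_distrib]
    exact Finset.sum_congr rfl fun s' _ => by ring
  -- transport lemma for ρ
  have transport : ∀ (f : S → ℝ) t, ∑ s', ρ (t + 1) s' * f s'
      = ∑ s, ρ t s * ∑ a, π s a * ∑ s', P s a s' * f s' := by
    intro f t
    simp only [hρ, Finset.sum_mul, Finset.mul_sum]
    rw [Finset.sum_comm]
    refine Finset.sum_congr rfl fun s _ => ?_
    rw [Finset.sum_comm]
    exact Finset.sum_congr rfl fun a _ => Finset.sum_congr rfl fun s' _ => by ring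
  -- ρ is a probability distribution
  have hρnn : ∀ t s, 0 ≤ ρ t s := by
    intro t
    induction t with
    | zero => intro s; rw [hρ0]; positivity
    | succ t ih => intro s'; rw [hρ t s']
                   exact Finset.sum_nonneg fun s _ => Finset.sum_nonneg fun a _ =>
                     mul_nonneg (mul_nonneg (ih s) (hπnn s a)) (hPnn s a s')
  have hρsum : ∀ t, ∑ s, ρ t s = 1 := by
    intro t
    induction t with
    | zero => simp [hρ0]
    | succ t ih =>
        have := transport (fun _ => 1) t
        simp only [mul_one, hPsum, hπsum] at this
        simpa [ih] using this
  have hρle : ∀ t s, ρ t s ≤ 1 := by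
    intro t s
    calc ρ t s ≤ ∑ s', ρ t s' := Finset.single_le_sum (fun s' _ => hρnn t s') (Finset.mem_univ s)
    _ = 1 := hρsum t
  -- E and G sequences
  set E : ℕ → ℝ := fun t => ∑ s, ρ t s * Δ s with hE
  set G : ℕ → ℝ := fun t => ∑ s, ρ t s * g s with hG
  have hrec : ∀ t, E t = G t + γ * E (t + 1) := by
    intro t
    simp only [hE, hG]
    rw [transport Δ t, Finset.mul_sum, ← Finset.sum_add_distrib]
    exact Finset.sum_congr rfl fun s _ => by rw [step s]; ring
  have hE0 : E 0 = Δ s₀ := by simp [hE, hρ0]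
  have hpartial : ∀ n, ∑ t ∈ Finset.range n, γ ^ t * G t = Δ s₀ - γ ^ n * E n := by
    intro n
    induction n with
    | zero => simp [hE0]
    | succ n ih =>
        rw [Finset.sum_range_succ, ih, hrec n]
        ring
  -- bounds
  have bound : ∀ (f : S → ℝ) t, |∑ s, ρ t s * f s| ≤ ∑ s, |f s| := by
    intro f t
    calc |∑ s, ρ t s * f s| ≤ ∑ s, |ρ t s * f s| := Finset.abs_sum_le_sum_abs _ _
    _ ≤ ∑ s, |f s| := by
        refine Finset.sum_le_sum fun s _ => ?_
        rw [abs_mul, abs_of_nonneg (hρnn t s)]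
        nlinarith [abs_nonneg (f s), hρle t s, hρnn t s]
  -- convergence of partial sums
  have htend0 : Filter.Tendsto (fun n => γ ^ n * E n) Filter.atTop (nhds 0) := by
    have hb : ∀ n, ‖γ ^ n * E n‖ ≤ (∑ s, |Δ s|) * γ ^ n := by
      intro n
      rw [Real.norm_eq_abs, abs_mul, abs_pow, abs_of_nonneg hγ0, mul_comm]
      exact mul_le_mul_of_nonneg_right (bound Δ n) (pow_nonneg hγ0 n)
    exact squeeze_zero_norm hb (by
      simpa using (tendsto_pow_atTop_nhds_zero_of_lt_one hγ0 hγ1).const_mul (∑ s, |Δ s|))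
  have htendS : Filter.Tendsto (fun n => ∑ t ∈ Finset.range n, γ ^ t * G t)
      Filter.atTop (nhds (Δ s₀)) := by
    simp only [hpartial]
    simpa using (tendsto_const_nhds (x := Δ s₀)).sub htend0
  have hsummable : Summable (fun t => γ ^ t * G t) := by
    rw [← summable_abs_iff]
    refine Summable.of_nonneg_of_le (fun t => abs_nonneg _)
      (fun t => ?_) (Summable.mul_right (∑ s, |g s|) (summable_geometric_of_lt_one hγ0 hγ1))
    rw [abs_mul, abs_pow, abs_of_nonneg hγ0]
    exact mul_le_mul_of_nonneg_left (bound g t) (pow_nonneg hγ0 t)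
  have htsum : ∑' t, γ ^ t * G t = Δ s₀ :=
    tendsto_nhds_unique hsummable.hasSum.tendsto_sum_nat htendS
  -- relate G to the triple sum
  have hGF : ∀ t, G t = γ * ∑ s, ∑ a, ∑ s', ρ t s * π s a * P s a s' *
      (lam s s' * (Vt s' - h s')) := by
    intro t
    simp only [hG, hg, Finset.mul_sum]
    exact Finset.sum_congr rfl fun s _ => Finset.sum_congr rfl fun a _ =>
      Finset.sum_congr rfl fun s' _ => by ring
  have h1γ : (1 : ℝ) - γ ≠ 0 := by linarith
  have key : V s₀ - Vt s₀ = γ * ∑' t : ℕ, γ ^ t *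
      ∑ s, ∑ a, ∑ s', ρ t s * π s a * P s a s' * (lam s s' * (Vt s' - h s')) := by
    rw [show V s₀ - Vt s₀ = Δ s₀ from rfl, ← htsum, ← tsum_mul_left]
    exact tsum_congr fun t => by rw [hGF t]; ring
  rw [key]
  field_simp
end

section
/- Under the reshaped-MDP setup, for any policy π̂, any λ and h, the suboptimality decomposes exactly as V*(d₀) − V^{π̂}(d₀) = Bias + Regret, where Bias := (γ/(1−γ)) E_{(s,a,s')∼d^{π*}}[ λ(s,s') (Ṽ^{π*}(s') − h(s')) ] and Regret := (Ṽ^{π*}(d₀) − Ṽ^{π̂}(d₀)) + (γ/(1−γ)) E_{(s,a,s')∼d^{π̂}}[ λ(s,s') (h(s') − Ṽ^{π̂}(s')) ]. Here π* is an optimal policy of the original MDP and V* its value. -/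
open Finset Filter

lemma hubl_key
    {S A : Type*} [Fintype S] [Fintype A]
    (P : S → A → S → ℝ) (r : S → A → ℝ)
    (γ : ℝ) (hγ0 : 0 ≤ γ) (hγ1 : γ < 1)
    (lam : S → S → ℝ) (hlam : ∀ s s', lam s s' ∈ Set.Icc (0 : ℝ) 1)
    (h : S → ℝ)
    (hPnn : ∀ s a s', 0 ≤ P s a s') (hPsum : ∀ s a, ∑ s', P s a s' = 1)
    (d₀ : S → ℝ) (hd₀nn : ∀ s, 0 ≤ d₀ s) (hd₀sum : ∑ s, d₀ s = 1)
    (π : S → A → ℝ)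
    (hπnn : ∀ s a, 0 ≤ π s a) (hπsum : ∀ s, ∑ a, π s a = 1)
    (V Vt : S → ℝ)
    (hV : ∀ s, V s = ∑ a, π s a * (r s a + γ * ∑ s', P s a s' * V s'))
    (hVt : ∀ s, Vt s = ∑ a, π s a * ∑ s', P s a s' *
      (r s a + γ * lam s s' * h s' + γ * (1 - lam s s') * Vt s'))
    (ρ : ℕ → S → ℝ)
    (hρ0 : ∀ s, ρ 0 s = d₀ s)
    (hρ : ∀ t s', ρ (t + 1) s' = ∑ s, ∑ a, ρ t s * π s a * P s a s') :
    (∑ s, d₀ s * V s) - (∑ s, d₀ s * Vt s) =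
      γ * ∑' t : ℕ, γ ^ t *
        ∑ s, ∑ a, ∑ s', ρ t s * π s a * P s a s' *
          (lam s s' * (Vt s' - h s')) := by
  set G : ℕ → ℝ := fun t => ∑ s, ∑ a, ∑ s', ρ t s * π s a * P s a s' *
      (lam s s' * (Vt s' - h s')) with hG
  -- pointwise Bellman difference
  have hΔ : ∀ s, V s - Vt s = γ * ∑ a, π s a * ∑ s', P s a s' *
      ((V s' - Vt s') + lam s s' * (Vt s' - h s')) := by
    intro s
    rw [hV s, hVt s, ← Finset.sum_sub_distrib, Finset.mul_sum]
    refine Finset.sum_congr rfl fun a _ => ?_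
    have e1 : r s a + γ * ∑ s', P s a s' * V s'
        = ∑ s', P s a s' * (r s a + γ * V s') := by
      have : ∑ s', P s a s' * (r s a + γ * V s')
          = (∑ s', P s a s') * r s a + γ * ∑ s', P s a s' * V s' := by
        rw [Finset.sum_mul, Finset.mul_sum, ← Finset.sum_add_distrib]
        exact Finset.sum_congr rfl fun s' _ => by ring
      rw [this, hPsum, one_mul]
    rw [e1, ← mul_sub, ← Finset.sum_sub_distrib]
    have e2 : ∑ s', (P s a s' * (r s a + γ * V s')
        - P s a s' * (r s a + γ * lam s s' * h s' + γ * (1 - lam s s') * Vt s'))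
        = γ * ∑ s', P s a s' * ((V s' - Vt s') + lam s s' * (Vt s' - h s')) := by
      rw [Finset.mul_sum]
      exact Finset.sum_congr rfl fun s' _ => by ring
    rw [e2]; ring
  -- rewrite the next-step distribution
  have hre : ∀ t, ∑ s', ρ (t + 1) s' * (V s' - Vt s')
      = ∑ s, ∑ a, ∑ s', ρ t s * π s a * P s a s' * (V s' - Vt s') := by
    intro t
    simp only [hρ, Finset.sum_mul]
    rw [Finset.sum_comm]
    refine Finset.sum_congr rfl fun s _ => ?_
    rw [Finset.sum_comm]
  -- one-step expansion
  have step : ∀ t, ∑ s, ρ t s * (V s - Vt s)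
      = γ * G t + γ * ∑ s', ρ (t + 1) s' * (V s' - Vt s') := by
    intro t
    have L : ∑ s, ρ t s * (V s - Vt s)
        = ∑ s, ∑ a, ∑ s', γ * (ρ t s * (π s a * (P s a s' *
            ((V s' - Vt s') + lam s s' * (Vt s' - h s'))))) := by
      refine Finset.sum_congr rfl fun s _ => ?_
      rw [hΔ s]
      simp only [Finset.mul_sum]
      exact Finset.sum_congr rfl fun a _ => Finset.sum_congr rfl fun s' _ => by ring
    rw [L, hre t, hG]
    simp only [Finset.mul_sum, ← Finset.sum_add_distrib]
    refine Finset.sum_congr rfl fun s _ => Finset.sum_congr rfl fun a _ =>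
      Finset.sum_congr rfl fun s' _ => by ring
  -- ρ is a probability distribution at every time
  have hρprop : ∀ t, (∀ s, 0 ≤ ρ t s) ∧ (∑ s, ρ t s = 1) := by
    intro t
    induction t with
    | zero => exact ⟨fun s => by rw [hρ0]; exact hd₀nn s, by simp only [hρ0, hd₀sum]⟩
    | succ t ih =>
      refine ⟨fun s' => ?_, ?_⟩
      · rw [hρ]
        exact Finset.sum_nonneg fun s _ => Finset.sum_nonneg fun a _ =>
          mul_nonneg (mul_nonneg (ih.1 s) (hπnn s a)) (hPnn s a s')
      · simp only [hρ]
        rw [Finset.sum_comm]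
        have : ∀ s, ∑ s', ∑ a, ρ t s * π s a * P s a s' = ρ t s := by
          intro s
          rw [Finset.sum_comm]
          have : ∀ a, ∑ s', ρ t s * π s a * P s a s' = ρ t s * π s a := by
            intro a
            rw [← Finset.mul_sum, hPsum, mul_one]
          simp only [this, ← Finset.mul_sum, hπsum, mul_one]
        simp only [this, ih.2]
  have hρle1 : ∀ t s, ρ t s ≤ 1 := fun t s => by
    have := Finset.single_le_sum (f := ρ t) (fun s _ => (hρprop t).1 s) (Finset.mem_univ s)
    rw [(hρprop t).2] at this; exact this
  -- bound on the tail term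
  set C : ℝ := ∑ s, |V s - Vt s| with hC
  have htail_bd : ∀ t, |∑ s, ρ t s * (V s - Vt s)| ≤ C := by
    intro t
    calc |∑ s, ρ t s * (V s - Vt s)| ≤ ∑ s, |ρ t s * (V s - Vt s)| :=
          Finset.abs_sum_le_sum_abs _ _
      _ ≤ ∑ s, |V s - Vt s| := by
          refine Finset.sum_le_sum fun s _ => ?_
          rw [abs_mul, abs_of_nonneg ((hρprop t).1 s)]
          nlinarith [abs_nonneg (V s - Vt s), hρle1 t s, (hρprop t).1 s]
      _ = C := rfl
  -- bound on G
  set M : ℝ := ∑ s : S, ∑ a : A, ∑ s' : S, |lam s s' * (Vt s' - h s')| with hM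
  have hGbd : ∀ t, |G t| ≤ M := by
    intro t
    rw [hG]
    calc |∑ s, ∑ a, ∑ s', ρ t s * π s a * P s a s' * (lam s s' * (Vt s' - h s'))|
        ≤ ∑ s, |∑ a, ∑ s', ρ t s * π s a * P s a s' * (lam s s' * (Vt s' - h s'))| :=
          Finset.abs_sum_le_sum_abs _ _
      _ ≤ M := by
          rw [hM]
          refine Finset.sum_le_sum fun s _ => ?_
          calc |∑ a, ∑ s', ρ t s * π s a * P s a s' * (lam s s' * (Vt s' - h s'))|
              ≤ ∑ a, |∑ s', ρ t s * π s a * P s a s' * (lam s s' * (Vt s' - h s'))| :=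
                Finset.abs_sum_le_sum_abs _ _
            _ ≤ ∑ a, ∑ s', |lam s s' * (Vt s' - h s')| := by
                refine Finset.sum_le_sum fun a _ => ?_
                calc |∑ s', ρ t s * π s a * P s a s' * (lam s s' * (Vt s' - h s'))|
                    ≤ ∑ s', |ρ t s * π s a * P s a s' * (lam s s' * (Vt s' - h s'))| :=
                      Finset.abs_sum_le_sum_abs _ _
                  _ ≤ ∑ s', |lam s s' * (Vt s' - h s')| := by
                      refine Finset.sum_le_sum fun s' _ => ?_
                      rw [abs_mul]
                      have h1 : |ρ t s * π s a * P s a s'| ≤ 1 := by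
                        rw [abs_of_nonneg (mul_nonneg (mul_nonneg ((hρprop t).1 s) (hπnn s a)) (hPnn s a s'))]
                        have hπ1 : π s a ≤ 1 := by
                          have := Finset.single_le_sum (f := π s) (fun a _ => hπnn s a) (Finset.mem_univ a)
                          rw [hπsum s] at this; exact this
                        have hP1 : P s a s' ≤ 1 := by
                          have := Finset.single_le_sum (f := P s a) (fun x _ => hPnn s a x) (Finset.mem_univ s')
                          rw [hPsum s a] at this; exact this
                        exact mul_le_one₀ (mul_le_one₀ (hρle1 t s) (hπnn s a) hπ1) (hPnn s a s') hP1
                      exact mul_le_of_le_one_left (abs_nonneg _) h1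
  -- partial sums identity
  have hpartial : ∀ T, ∑ s, d₀ s * (V s - Vt s)
      = (∑ t ∈ Finset.range T, γ ^ (t + 1) * G t) + γ ^ T * ∑ s, ρ T s * (V s - Vt s) := by
    intro T
    induction T with
    | zero => simp [hρ0]
    | succ T ih =>
      rw [ih, step T, Finset.sum_range_succ, pow_succ]
      ring
  -- summability
  have hsum : Summable (fun t => γ ^ (t + 1) * G t) := by
    refine Summable.of_norm_bounded (g := fun t => (γ * M) * γ ^ t)
      ((summable_geometric_of_lt_one hγ0 hγ1).mul_left _) fun t => ?_
    have hMnn : 0 ≤ M := by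
      rw [hM]
      exact Finset.sum_nonneg fun s _ => Finset.sum_nonneg fun a _ =>
        Finset.sum_nonneg fun s' _ => abs_nonneg _
    have : ‖γ ^ (t + 1) * G t‖ = γ ^ (t + 1) * |G t| := by
      rw [norm_mul, Real.norm_eq_abs, Real.norm_eq_abs, abs_of_nonneg (pow_nonneg hγ0 _)]
    rw [this, pow_succ]
    have h4 := mul_le_mul_of_nonneg_left (hGbd t) (mul_nonneg (pow_nonneg hγ0 t) hγ0)
    show γ ^ t * γ * |G t| ≤ γ * M * γ ^ t
    nlinarith [h4]
  -- limits
  have h1 : Tendsto (fun T => ∑ t ∈ Finset.range T, γ ^ (t + 1) * G t)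
      atTop (nhds (∑' t, γ ^ (t + 1) * G t)) := hsum.hasSum.tendsto_sum_nat
  have h2 : Tendsto (fun T => γ ^ T * ∑ s, ρ T s * (V s - Vt s)) atTop (nhds 0) := by
    refine squeeze_zero_norm (a := fun T => C * γ ^ T) (fun T => ?_) ?_
    · show ‖γ ^ T * ∑ s, ρ T s * (V s - Vt s)‖ ≤ C * γ ^ T
      rw [norm_mul, Real.norm_eq_abs, Real.norm_eq_abs, abs_of_nonneg (pow_nonneg hγ0 _)]
      have := htail_bd T
      nlinarith [pow_nonneg hγ0 T, abs_nonneg (∑ s, ρ T s * (V s - Vt s))]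
    · simpa using (tendsto_pow_atTop_nhds_zero_of_lt_one hγ0 hγ1).const_mul C
  have h3 : Tendsto (fun T => ∑ t ∈ Finset.range T, γ ^ (t + 1) * G t)
      atTop (nhds (∑ s, d₀ s * (V s - Vt s))) := by
    have heq : (fun T => ∑ t ∈ Finset.range T, γ ^ (t + 1) * G t)
        = fun T => (∑ s, d₀ s * (V s - Vt s)) - γ ^ T * ∑ s, ρ T s * (V s - Vt s) := by
      funext T; rw [hpartial T]; ring
    rw [heq]
    simpa using tendsto_const_nhds.sub h2
  have hts : (∑' t, γ ^ (t + 1) * G t) = ∑ s, d₀ s * (V s - Vt s) :=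
    tendsto_nhds_unique h1 h3
  have hfin : (∑ s, d₀ s * V s) - (∑ s, d₀ s * Vt s) = ∑ s, d₀ s * (V s - Vt s) := by
    rw [← Finset.sum_sub_distrib]
    exact Finset.sum_congr rfl fun s _ => by ring
  rw [hfin, ← hts, ← tsum_mul_left]
  exact tsum_congr fun t => by rw [pow_succ]; ring



/-- Bias-regret decomposition (Theorem 1 of HUBL).
Finite MDP with transition `P`, reward `r`, discount `γ ∈ [0,1)`, initial
distribution `d₀`.  `πstar` is an optimal policy with value `Vstar`, `πhat` any
policy with value `Vhat`.  Reshaped MDP: `r̃(s,a) = r(s,a) + γ E[λ h]`,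
`γ̃(s,s') = γ(1−λ(s,s'))`, with reshaped values `Vtstar`, `Vthat` of `πstar`,
`πhat`.  `ρstar, ρhat` are the time-`t` state distributions of the two policies
started from `d₀`.  Then `V*(d₀) − V^{π̂}(d₀) = Bias + Regret` with
`Bias = (γ/(1−γ)) E_{d^{π*}}[λ(s,s')(Ṽ^{π*}(s') − h(s'))]` and
`Regret = Ṽ^{π*}(d₀) − Ṽ^{π̂}(d₀) + (γ/(1−γ)) E_{d^{π̂}}[λ(s,s')(h(s') − Ṽ^{π̂}(s'))]`. -/
theorem hubl_bias_regret_decomposition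
    {S A : Type*} [Fintype S] [Fintype A]
    (P : S → A → S → ℝ) (r : S → A → ℝ)
    (γ : ℝ) (hγ0 : 0 ≤ γ) (hγ1 : γ < 1)
    (lam : S → S → ℝ) (hlam : ∀ s s', lam s s' ∈ Set.Icc (0 : ℝ) 1)
    (h : S → ℝ)
    (hPnn : ∀ s a s', 0 ≤ P s a s') (hPsum : ∀ s a, ∑ s', P s a s' = 1)
    (d₀ : S → ℝ) (hd₀nn : ∀ s, 0 ≤ d₀ s) (hd₀sum : ∑ s, d₀ s = 1)
    (πstar πhat : S → A → ℝ)
    (hπsnn : ∀ s a, 0 ≤ πstar s a) (hπssum : ∀ s, ∑ a, πstar s a = 1)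
    (hπhnn : ∀ s a, 0 ≤ πhat s a) (hπhsum : ∀ s, ∑ a, πhat s a = 1)
    (Vstar Vhat Vtstar Vthat : S → ℝ)
    (hVstar : ∀ s, Vstar s = ∑ a, πstar s a *
      (r s a + γ * ∑ s', P s a s' * Vstar s'))
    (hVhat : ∀ s, Vhat s = ∑ a, πhat s a *
      (r s a + γ * ∑ s', P s a s' * Vhat s'))
    -- optimality of πstar: its value dominates that of every policy
    (hopt : ∀ (π' : S → A → ℝ) (V' : S → ℝ),
      (∀ s a, 0 ≤ π' s a) → (∀ s, ∑ a, π' s a = 1) →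
      (∀ s, V' s = ∑ a, π' s a * (r s a + γ * ∑ s', P s a s' * V' s')) →
      ∀ s, V' s ≤ Vstar s)
    (hVtstar : ∀ s, Vtstar s = ∑ a, πstar s a * ∑ s', P s a s' *
      (r s a + γ * lam s s' * h s' + γ * (1 - lam s s') * Vtstar s'))
    (hVthat : ∀ s, Vthat s = ∑ a, πhat s a * ∑ s', P s a s' *
      (r s a + γ * lam s s' * h s' + γ * (1 - lam s s') * Vthat s'))
    (ρstar ρhat : ℕ → S → ℝ)
    (hρs0 : ∀ s, ρstar 0 s = d₀ s)
    (hρs : ∀ t s', ρstar (t + 1) s' = ∑ s, ∑ a, ρstar t s * πstar s a * P s a s')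
    (hρh0 : ∀ s, ρhat 0 s = d₀ s)
    (hρh : ∀ t s', ρhat (t + 1) s' = ∑ s, ∑ a, ρhat t s * πhat s a * P s a s') :
    (∑ s, d₀ s * Vstar s) - (∑ s, d₀ s * Vhat s) =
      -- Bias
      ((γ / (1 - γ)) * ((1 - γ) * ∑' t : ℕ, γ ^ t *
        ∑ s, ∑ a, ∑ s', ρstar t s * πstar s a * P s a s' *
          (lam s s' * (Vtstar s' - h s'))))
      +
      -- Regret
      (((∑ s, d₀ s * Vtstar s) - (∑ s, d₀ s * Vthat s))
        + (γ / (1 - γ)) * ((1 - γ) * ∑' t : ℕ, γ ^ t *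
            ∑ s, ∑ a, ∑ s', ρhat t s * πhat s a * P s a s' *
              (lam s s' * (h s' - Vthat s')))) := by
  have Hs := hubl_key P r γ hγ0 hγ1 lam hlam h hPnn hPsum d₀ hd₀nn hd₀sum
    πstar hπsnn hπssum Vstar Vtstar hVstar hVtstar ρstar hρs0 hρs
  have Hh := hubl_key P r γ hγ0 hγ1 lam hlam h hPnn hPsum d₀ hd₀nn hd₀sum
    πhat hπhnn hπhsum Vhat Vthat hVhat hVthat ρhat hρh0 hρh
  have hneg : (∑' t : ℕ, γ ^ t * ∑ s, ∑ a, ∑ s', ρhat t s * πhat s a * P s a s' *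
        (lam s s' * (h s' - Vthat s')))
      = - ∑' t : ℕ, γ ^ t * ∑ s, ∑ a, ∑ s', ρhat t s * πhat s a * P s a s' *
        (lam s s' * (Vthat s' - h s')) := by
    rw [← tsum_neg]
    refine tsum_congr fun t => ?_
    rw [← mul_neg, ← Finset.sum_neg_distrib]
    refine congrArg (γ ^ t * ·) (Finset.sum_congr rfl fun s _ => ?_)
    rw [← Finset.sum_neg_distrib]
    refine Finset.sum_congr rfl fun a _ => ?_
    rw [← Finset.sum_neg_distrib]
    exact Finset.sum_congr rfl fun s' _ => by ring
  rw [hneg]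
  have hne : (1:ℝ) - γ ≠ 0 := by linarith
  have e : ∀ x : ℝ, γ / (1 - γ) * ((1 - γ) * x) = γ * x := fun x => by
    field_simp
  rw [e, e]
  linarith [Hs, Hh]
end

section
/- In a finite MDP with optimal value V*, suppose the heuristic satisfies h(s) ≤ V*(s) for all s ∈ S, and let λ: S×S → [0,1] be arbitrary. Then the value of the optimal policy π* in the reshaped MDP is pointwise dominated by the original optimal value: Ṽ^{π*}(s) ≤ V*(s) for all s ∈ S. -/
/-- Lemma `negative` of HUBL.  If the heuristic satisfies
`h ≤ V*` pointwise, then the reshaped value of the optimal policy `π*` is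
pointwise dominated by the optimal value: `Ṽ^{π*} ≤ V*`. -/
theorem hubl_reshaped_value_dominated
    {S A : Type*} [Fintype S] [Fintype A]
    (P : S → A → S → ℝ) (r : S → A → ℝ)
    (γ : ℝ) (hγ0 : 0 ≤ γ) (hγ1 : γ < 1)
    (πstar : S → A → ℝ) (hπnn : ∀ s a, 0 ≤ πstar s a)
    (hπsum : ∀ s, ∑ a, πstar s a = 1)
    (hPnn : ∀ s a s', 0 ≤ P s a s') (hPsum : ∀ s a, ∑ s', P s a s' = 1)
    (lam : S → S → ℝ) (hlam : ∀ s s', lam s s' ∈ Set.Icc (0 : ℝ) 1)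
    (h Vstar Vtstar : S → ℝ)
    (hVstar : ∀ s, Vstar s = ∑ a, πstar s a *
      (r s a + γ * ∑ s', P s a s' * Vstar s'))
    (hVtstar : ∀ s, Vtstar s = ∑ a, πstar s a * ∑ s', P s a s' *
      (r s a + γ * lam s s' * h s' + γ * (1 - lam s s') * Vtstar s'))
    (hh : ∀ s, h s ≤ Vstar s) :
    ∀ s, Vtstar s ≤ Vstar s := by
  intro s0
  obtain ⟨s, -, hs⟩ := Finset.exists_max_image Finset.univ
    (fun t => Vtstar t - Vstar t) ⟨s0, Finset.mem_univ s0⟩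
  set M := Vtstar s - Vstar s with hM
  suffices hM0 : M ≤ 0 by
    have := hs s0 (Finset.mem_univ s0); linarith
  by_contra hpos
  push_neg at hpos
  have key : M ≤ γ * M := by
    have hVs : Vstar s = ∑ a, πstar s a * ∑ s', P s a s' * (r s a + γ * Vstar s') := by
      rw [hVstar s]
      refine Finset.sum_congr rfl (fun a _ => ?_)
      congr 1
      have : ∀ s' ∈ Finset.univ, P s a s' * (r s a + γ * Vstar s')
          = P s a s' * r s a + γ * (P s a s' * Vstar s') := fun s' _ => by ring
      rw [Finset.sum_congr rfl this, Finset.sum_add_distrib, ← Finset.sum_mul,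
        hPsum, ← Finset.mul_sum]
      ring
    have hdiff : M = ∑ a, πstar s a * ∑ s', P s a s' *
        (γ * lam s s' * (h s' - Vstar s') + γ * (1 - lam s s') * (Vtstar s' - Vstar s')) := by
      rw [hM, hVtstar s, hVs, ← Finset.sum_sub_distrib]
      refine Finset.sum_congr rfl (fun a _ => ?_)
      rw [← mul_sub, ← Finset.sum_sub_distrib]
      congr 1
      refine Finset.sum_congr rfl (fun s' _ => ?_)
      ring
    calc M = ∑ a, πstar s a * ∑ s', P s a s' *
        (γ * lam s s' * (h s' - Vstar s') + γ * (1 - lam s s') * (Vtstar s' - Vstar s')) := hdiff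
      _ ≤ ∑ a, πstar s a * (γ * M) := by
          refine Finset.sum_le_sum (fun a _ => mul_le_mul_of_nonneg_left ?_ (hπnn s a))
          calc ∑ s', P s a s' *
              (γ * lam s s' * (h s' - Vstar s') + γ * (1 - lam s s') * (Vtstar s' - Vstar s'))
              ≤ ∑ s', P s a s' * (γ * M) := by
                refine Finset.sum_le_sum (fun s' _ => mul_le_mul_of_nonneg_left ?_ (hPnn s a s'))
                have hl := hlam s s'
                have h1 : 0 ≤ γ * lam s s' * (Vstar s' - h s') :=
                  mul_nonneg (mul_nonneg hγ0 hl.1) (sub_nonneg.2 (hh s'))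
                have h2 : 0 ≤ γ * lam s s' * M :=
                  mul_nonneg (mul_nonneg hγ0 hl.1) hpos.le
                have h3 : 0 ≤ γ * (1 - lam s s') * (M - (Vtstar s' - Vstar s')) := by
                  have := hs s' (Finset.mem_univ s')
                  exact mul_nonneg (mul_nonneg hγ0 (by linarith [hl.2])) (by simpa using sub_nonneg.2 this)
                nlinarith
            _ = γ * M := by rw [← Finset.sum_mul, hPsum, one_mul]
      _ = γ * M := by rw [← Finset.sum_mul, hπsum, one_mul]
  nlinarith
end

section
/- Bias upper bound under exact behavior heuristic: In the setting of the bias-regret decomposition with constant λ on the support Ω and heuristic h(s) = V^μ(s) on Ω, if additionally h(s) ≤ V*(s) for all s (which holds since V^μ ≤ V*), then Bias(π̂, λ) ≤ (γλ/(1−γ)) E_{(s,a,s')∼d^{π*}}[ V*(s') − V^μ(s') | s, s' ∈ Ω ]. In particular, if μ is an optimal policy (V^μ = V* on Ω and the optimal occupancy stays in Ω), the bias is zero. -/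
open Classical in
private lemma hubl_aux_sup {S : Type*} [Fintype S] [Nonempty S] {γ : ℝ}
    (hγ1 : γ < 1) (D : S → ℝ)
    (hD : ∀ s, D s ≤ γ * max (Finset.univ.sup' Finset.univ_nonempty D) 0) :
    ∀ s, D s ≤ 0 := by
  set M := Finset.univ.sup' Finset.univ_nonempty D with hMdef
  have hMle : M ≤ γ * max M 0 := Finset.sup'_le _ _ fun s _ => hD s
  have hM0 : M ≤ 0 := by
    by_contra hpos
    push_neg at hpos
    rw [max_eq_left hpos.le] at hMle
    nlinarith [mul_pos hpos (sub_pos.mpr hγ1)]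
  intro s
  exact le_trans (Finset.le_sup' D (Finset.mem_univ s)) hM0

open Classical in
/-- Bias upper bound under exact behavior heuristic (Lemma
`bias-bound` of HUBL).  Constant blending `λ` on the support `Ω` (zero
outside), heuristic `h = V^μ` on `Ω` with `h ≤ V*` everywhere.  Then
`Bias ≤ (γλ/(1−γ)) E_{d^{π*}}[V*(s') − V^μ(s') | s, s' ∈ Ω]`, where both
conditional expectations are normalized by the probability `Z` of the event
`{s, s' ∈ Ω}` under the discounted occupancy of `π*`.  In particular, if
`V^μ = V*` on `Ω` and the occupancy of `π*` stays in `Ω`, the bias is zero. -/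
theorem hubl_bias_upper_bound
    {S A : Type*} [Fintype S] [Fintype A]
    (P : S → A → S → ℝ) (r : S → A → ℝ)
    (γ : ℝ) (hγ0 : 0 ≤ γ) (hγ1 : γ < 1)
    (lam : ℝ) (hlam : lam ∈ Set.Icc (0 : ℝ) 1)
    (Ω : Set S)
    (hPnn : ∀ s a s', 0 ≤ P s a s') (hPsum : ∀ s a, ∑ s', P s a s' = 1)
    (πstar μ : S → A → ℝ)
    (hπnn : ∀ s a, 0 ≤ πstar s a) (hπsum : ∀ s, ∑ a, πstar s a = 1)
    (hμnn : ∀ s a, 0 ≤ μ s a) (hμsum : ∀ s, ∑ a, μ s a = 1)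
    (Vstar Vμ Vtstar : S → ℝ)
    (hVstar : ∀ s, Vstar s = ∑ a, πstar s a *
      (r s a + γ * ∑ s', P s a s' * Vstar s'))
    (hVμ : ∀ s, Vμ s = ∑ a, μ s a * (r s a + γ * ∑ s', P s a s' * Vμ s'))
    -- optimality of πstar
    (hopt : ∀ (π' : S → A → ℝ) (V' : S → ℝ),
      (∀ s a, 0 ≤ π' s a) → (∀ s, ∑ a, π' s a = 1) →
      (∀ s, V' s = ∑ a, π' s a * (r s a + γ * ∑ s', P s a s' * V' s')) →
      ∀ s, V' s ≤ Vstar s)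
    (h : S → ℝ)
    (hh : ∀ s ∈ Ω, h s = Vμ s) (hhle : ∀ s, h s ≤ Vstar s)
    -- reshaped value of πstar with blending λ(s,s') = lam·1{s∈Ω ∧ s'∈Ω}
    (hVtstar : ∀ s, Vtstar s = ∑ a, πstar s a * ∑ s', P s a s' *
      (r s a + γ * (if s ∈ Ω ∧ s' ∈ Ω then lam else 0) * h s'
        + γ * (1 - (if s ∈ Ω ∧ s' ∈ Ω then lam else 0)) * Vtstar s'))
    (d₀ : S → ℝ) (hd₀nn : ∀ s, 0 ≤ d₀ s) (hd₀sum : ∑ s, d₀ s = 1)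
    (ρ : ℕ → S → ℝ) (hρ0 : ∀ s, ρ 0 s = d₀ s)
    (hρ : ∀ t s', ρ (t + 1) s' = ∑ s, ∑ a, ρ t s * πstar s a * P s a s') :
    -- probability of the conditioning event {s ∈ Ω ∧ s' ∈ Ω}
    (let Z : ℝ := (1 - γ) * ∑' t : ℕ, γ ^ t *
        ∑ s, ∑ a, ∑ s', ρ t s * πstar s a * P s a s' *
          (if s ∈ Ω ∧ s' ∈ Ω then (1 : ℝ) else 0);
     ((γ / (1 - γ)) * ((1 - γ) * ∑' t : ℕ, γ ^ t *
        ∑ s, ∑ a, ∑ s', ρ t s * πstar s a * P s a s' *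
          ((if s ∈ Ω ∧ s' ∈ Ω then lam else 0) * (Vtstar s' - h s'))) / Z
      ≤ (γ * lam / (1 - γ)) * ((1 - γ) * ∑' t : ℕ, γ ^ t *
          ∑ s, ∑ a, ∑ s', ρ t s * πstar s a * P s a s' *
            ((if s ∈ Ω ∧ s' ∈ Ω then (1 : ℝ) else 0) *
              (Vstar s' - Vμ s'))) / Z)
     ∧ ((∀ s ∈ Ω, Vμ s = Vstar s) → (∀ t s, s ∉ Ω → ρ t s = 0) →
        (γ / (1 - γ)) * ((1 - γ) * ∑' t : ℕ, γ ^ t *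
          ∑ s, ∑ a, ∑ s', ρ t s * πstar s a * P s a s' *
            ((if s ∈ Ω ∧ s' ∈ Ω then lam else 0) * (Vtstar s' - h s'))) / Z
          = 0)) := by
  obtain hemp | hne := isEmpty_or_nonempty S
  · simp
  intro Z
  have h1γ : (0:ℝ) < 1 - γ := by linarith
  have hne1γ : (1:ℝ) - γ ≠ 0 := h1γ.ne'
  -- basic facts about ρ
  have hρnn : ∀ t s, 0 ≤ ρ t s := by
    intro t
    induction t with
    | zero => intro s; rw [hρ0]; exact hd₀nn s
    | succ t ih =>
      intro s'
      rw [hρ]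
      exact Finset.sum_nonneg fun s _ => Finset.sum_nonneg fun a _ =>
        mul_nonneg (mul_nonneg (ih s) (hπnn s a)) (hPnn s a s')
  have hρsum : ∀ t, ∑ s, ρ t s = 1 := by
    intro t
    induction t with
    | zero => simp [hρ0, hd₀sum]
    | succ t ih =>
      calc ∑ s', ρ (t + 1) s'
          = ∑ s', ∑ s, ∑ a, ρ t s * πstar s a * P s a s' :=
            Finset.sum_congr rfl fun s' _ => hρ t s'
        _ = ∑ s, ∑ s', ∑ a, ρ t s * πstar s a * P s a s' := Finset.sum_comm
        _ = ∑ s, ∑ a, ∑ s', ρ t s * πstar s a * P s a s' :=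
            Finset.sum_congr rfl fun s _ => Finset.sum_comm
        _ = ∑ s, ∑ a, ρ t s * πstar s a := by
            refine Finset.sum_congr rfl fun s _ => Finset.sum_congr rfl fun a _ => ?_
            rw [← Finset.mul_sum, hPsum, mul_one]
        _ = ∑ s, ρ t s := by
            refine Finset.sum_congr rfl fun s _ => ?_
            rw [← Finset.mul_sum, hπsum, mul_one]
        _ = 1 := ih
  have hρle1 : ∀ t s, ρ t s ≤ 1 := by
    intro t s
    calc ρ t s ≤ ∑ s, ρ t s :=
          Finset.single_le_sum (fun i _ => hρnn t i) (Finset.mem_univ s)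
      _ = 1 := hρsum t
  have hπle1 : ∀ s a, πstar s a ≤ 1 := by
    intro s a
    calc πstar s a ≤ ∑ a, πstar s a :=
          Finset.single_le_sum (fun i _ => hπnn s i) (Finset.mem_univ a)
      _ = 1 := hπsum s
  have hPle1 : ∀ s a s', P s a s' ≤ 1 := by
    intro s a s'
    calc P s a s' ≤ ∑ s', P s a s' :=
          Finset.single_le_sum (fun i _ => hPnn s a i) (Finset.mem_univ s')
      _ = 1 := hPsum s a
  -- summability machinery
  have hcoeffnn : ∀ t s a s', 0 ≤ ρ t s * πstar s a * P s a s' := fun t s a s' =>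
    mul_nonneg (mul_nonneg (hρnn t s) (hπnn s a)) (hPnn s a s')
  have hcoeffle1 : ∀ t s a s', ρ t s * πstar s a * P s a s' ≤ 1 := fun t s a s' =>
    mul_le_one₀ (mul_le_one₀ (hρle1 t s) (hπnn s a) (hπle1 s a)) (hPnn s a s') (hPle1 s a s')
  have habs : ∀ (w : S → S → ℝ) t,
      |∑ s, ∑ a, ∑ s', ρ t s * πstar s a * P s a s' * w s s'|
        ≤ ∑ s : S, ∑ _a : A, ∑ s' : S, |w s s'| := by
    intro w t
    refine (Finset.abs_sum_le_sum_abs _ _).trans (Finset.sum_le_sum fun s _ => ?_)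
    refine (Finset.abs_sum_le_sum_abs _ _).trans (Finset.sum_le_sum fun a _ => ?_)
    refine (Finset.abs_sum_le_sum_abs _ _).trans (Finset.sum_le_sum fun s' _ => ?_)
    rw [abs_mul, abs_of_nonneg (hcoeffnn t s a s')]
    exact mul_le_of_le_one_left (abs_nonneg _) (hcoeffle1 t s a s')
  have hsummable : ∀ w : S → S → ℝ,
      Summable (fun t => γ ^ t * ∑ s, ∑ a, ∑ s',
        ρ t s * πstar s a * P s a s' * w s s') := by
    intro w
    refine Summable.of_norm_bounded (g := fun t => (∑ s : S, ∑ _a : A, ∑ s' : S, |w s s'|) * γ ^ t)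
      ((summable_geometric_of_lt_one hγ0 hγ1).mul_left _) fun t => ?_
    rw [Real.norm_eq_abs, abs_mul, abs_pow, abs_of_nonneg hγ0, mul_comm]
    exact mul_le_mul_of_nonneg_right (habs w t) (pow_nonneg hγ0 t)
  -- rewrite Vstar in double-sum form
  have hVstar' : ∀ s, Vstar s = ∑ a, πstar s a * ∑ s', P s a s' *
      (r s a + γ * Vstar s') := by
    intro s
    rw [hVstar s]
    refine Finset.sum_congr rfl fun a _ => ?_
    congr 1
    have : ∑ s', P s a s' * (r s a + γ * Vstar s')
        = ∑ s', (P s a s' * r s a + γ * (P s a s' * Vstar s')) :=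
      Finset.sum_congr rfl fun s' _ => by ring
    rw [this, Finset.sum_add_distrib, ← Finset.sum_mul, hPsum, one_mul,
      ← Finset.mul_sum]
  -- difference identities
  have hdiff : ∀ s, Vtstar s - Vstar s = ∑ a, πstar s a * ∑ s', P s a s' *
      (γ * (if s ∈ Ω ∧ s' ∈ Ω then lam else 0) * (h s' - Vstar s')
        + γ * (1 - (if s ∈ Ω ∧ s' ∈ Ω then lam else 0)) * (Vtstar s' - Vstar s')) := by
    intro s
    rw [hVtstar s, hVstar' s, ← Finset.sum_sub_distrib]
    refine Finset.sum_congr rfl fun a _ => ?_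
    rw [← mul_sub, ← Finset.sum_sub_distrib]
    congr 1
    exact Finset.sum_congr rfl fun s' _ => by ring
  have hdiff' : ∀ s, Vstar s - Vtstar s = ∑ a, πstar s a * ∑ s', P s a s' *
      (γ * (if s ∈ Ω ∧ s' ∈ Ω then lam else 0) * (Vstar s' - h s')
        + γ * (1 - (if s ∈ Ω ∧ s' ∈ Ω then lam else 0)) * (Vstar s' - Vtstar s')) := by
    intro s
    rw [hVstar' s, hVtstar s, ← Finset.sum_sub_distrib]
    refine Finset.sum_congr rfl fun a _ => ?_
    rw [← mul_sub, ← Finset.sum_sub_distrib]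
    congr 1
    exact Finset.sum_congr rfl fun s' _ => by ring
  have hL0 : ∀ s s' : S, 0 ≤ (if s ∈ Ω ∧ s' ∈ Ω then lam else 0) := by
    intro s s'; split_ifs; exacts [hlam.1, le_refl 0]
  have hL1 : ∀ s s' : S, (if s ∈ Ω ∧ s' ∈ Ω then lam else 0) ≤ 1 := by
    intro s s'; split_ifs; exacts [hlam.2, zero_le_one]
  -- domination Vtstar ≤ Vstar
  have hdom : ∀ s, Vtstar s ≤ Vstar s := by
    have key : ∀ s, Vtstar s - Vstar s ≤ 0 := by
      apply hubl_aux_sup hγ1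
      intro s
      set M := Finset.univ.sup' Finset.univ_nonempty
        (fun s => Vtstar s - Vstar s) with hMdef
      rw [hdiff s]
      have hinner : ∀ a, (∑ s', P s a s' *
          (γ * (if s ∈ Ω ∧ s' ∈ Ω then lam else 0) * (h s' - Vstar s')
            + γ * (1 - (if s ∈ Ω ∧ s' ∈ Ω then lam else 0)) * (Vtstar s' - Vstar s')))
          ≤ γ * max M 0 := by
        intro a
        have step : ∀ s', P s a s' *
            (γ * (if s ∈ Ω ∧ s' ∈ Ω then lam else 0) * (h s' - Vstar s')
              + γ * (1 - (if s ∈ Ω ∧ s' ∈ Ω then lam else 0)) * (Vtstar s' - Vstar s'))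
            ≤ P s a s' * (γ * max M 0) := by
          intro s'
          refine mul_le_mul_of_nonneg_left ?_ (hPnn s a s')
          have e1 : γ * (if s ∈ Ω ∧ s' ∈ Ω then lam else 0) * (h s' - Vstar s') ≤ 0 :=
            mul_nonpos_of_nonneg_of_nonpos (mul_nonneg hγ0 (hL0 s s'))
              (sub_nonpos.mpr (hhle s'))
          have hDM : Vtstar s' - Vstar s' ≤ max M 0 :=
            le_trans (Finset.le_sup' (fun s => Vtstar s - Vstar s)
              (Finset.mem_univ s')) (le_max_left _ _)
          have e2 : γ * (1 - (if s ∈ Ω ∧ s' ∈ Ω then lam else 0)) * (Vtstar s' - Vstar s')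
              ≤ γ * (1 - (if s ∈ Ω ∧ s' ∈ Ω then lam else 0)) * max M 0 :=
            mul_le_mul_of_nonneg_left hDM
              (mul_nonneg hγ0 (by linarith [hL1 s s']))
          have e3 : γ * (1 - (if s ∈ Ω ∧ s' ∈ Ω then lam else 0)) * max M 0
              ≤ γ * max M 0 := by
            have := le_max_right M 0
            nlinarith [hL0 s s', mul_nonneg hγ0 (hL0 s s'),
              mul_nonneg (mul_nonneg hγ0 (hL0 s s')) (le_max_right M 0)]
          linarith
        calc (∑ s', P s a s' * _) ≤ ∑ s', P s a s' * (γ * max M 0) :=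
              Finset.sum_le_sum fun s' _ => step s'
          _ = γ * max M 0 := by rw [← Finset.sum_mul, hPsum, one_mul]
      calc (∑ a, πstar s a * _) ≤ ∑ a, πstar s a * (γ * max M 0) :=
            Finset.sum_le_sum fun a _ => mul_le_mul_of_nonneg_left (hinner a) (hπnn s a)
        _ = γ * max M 0 := by rw [← Finset.sum_mul, hπsum, one_mul]
    intro s
    linarith [key s]
  -- Z is nonnegative
  have hZnn : 0 ≤ Z := by
    refine mul_nonneg (le_of_lt h1γ) (tsum_nonneg fun t => mul_nonneg
      (pow_nonneg hγ0 t) (Finset.sum_nonneg fun s _ => Finset.sum_nonneg fun a _ =>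
        Finset.sum_nonneg fun s' _ => mul_nonneg (hcoeffnn t s a s') ?_))
    split_ifs <;> norm_num
  have hdivle : ∀ a b : ℝ, a ≤ b → a / Z ≤ b / Z := by
    intro a b hab
    rw [div_eq_mul_inv, div_eq_mul_inv]
    exact mul_le_mul_of_nonneg_right hab (inv_nonneg.mpr hZnn)
  have hcan : ∀ c x : ℝ, c / (1 - γ) * ((1 - γ) * x) = c * x := by
    intro c x; field_simp
  constructor
  · -- main inequality
    apply hdivle
    rw [hcan, hcan]
    -- goal: γ * T₁ ≤ γ * lam * T₂
    rw [mul_assoc]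
    refine mul_le_mul_of_nonneg_left ?_ hγ0
    -- T₁ ≤ lam * T₂
    rw [← tsum_mul_left]
    have hmono : ∀ t, (∑ s, ∑ a, ∑ s', ρ t s * πstar s a * P s a s' *
          ((if s ∈ Ω ∧ s' ∈ Ω then lam else 0) * (Vtstar s' - h s')))
        ≤ lam * ∑ s, ∑ a, ∑ s', ρ t s * πstar s a * P s a s' *
          ((if s ∈ Ω ∧ s' ∈ Ω then (1:ℝ) else 0) * (Vstar s' - Vμ s')) := by
      intro t
      rw [Finset.mul_sum]
      refine Finset.sum_le_sum fun s _ => ?_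
      rw [Finset.mul_sum]
      refine Finset.sum_le_sum fun a _ => ?_
      rw [Finset.mul_sum]
      refine Finset.sum_le_sum fun s' _ => ?_
      rw [mul_left_comm lam (ρ t s * πstar s a * P s a s')]
      refine mul_le_mul_of_nonneg_left ?_ (hcoeffnn t s a s')
      split_ifs with hc
      · rw [one_mul, hh s' hc.2]
        exact mul_le_mul_of_nonneg_left (by linarith [hdom s']) hlam.1
      · simp
    refine Summable.tsum_le_tsum (fun t => ?_)
      (hsummable fun s s' => (if s ∈ Ω ∧ s' ∈ Ω then lam else 0) * (Vtstar s' - h s'))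
      (Summable.mul_left lam (hsummable fun s s' =>
        (if s ∈ Ω ∧ s' ∈ Ω then (1:ℝ) else 0) * (Vstar s' - Vμ s')))
    calc γ ^ t * (∑ s, ∑ a, ∑ s', ρ t s * πstar s a * P s a s' *
          ((if s ∈ Ω ∧ s' ∈ Ω then lam else 0) * (Vtstar s' - h s')))
        ≤ γ ^ t * (lam * ∑ s, ∑ a, ∑ s', ρ t s * πstar s a * P s a s' *
          ((if s ∈ Ω ∧ s' ∈ Ω then (1:ℝ) else 0) * (Vstar s' - Vμ s'))) :=
          mul_le_mul_of_nonneg_left (hmono t) (pow_nonneg hγ0 t)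
      _ = lam * (γ ^ t * ∑ s, ∑ a, ∑ s', ρ t s * πstar s a * P s a s' *
          ((if s ∈ Ω ∧ s' ∈ Ω then (1:ℝ) else 0) * (Vstar s' - Vμ s'))) := by ring
  · -- zero bias when μ is optimal on Ω
    intro hVeq _
    have hLh : ∀ s' ∈ Ω, h s' = Vstar s' := fun s' hs' =>
      (hh s' hs').trans (hVeq s' hs')
    have hrev : ∀ s, Vstar s ≤ Vtstar s := by
      have key : ∀ s, Vstar s - Vtstar s ≤ 0 := by
        apply hubl_aux_sup hγ1
        intro s
        set M := Finset.univ.sup' Finset.univ_nonempty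
          (fun s => Vstar s - Vtstar s) with hMdef
        rw [hdiff' s]
        have hinner : ∀ a, (∑ s', P s a s' *
            (γ * (if s ∈ Ω ∧ s' ∈ Ω then lam else 0) * (Vstar s' - h s')
              + γ * (1 - (if s ∈ Ω ∧ s' ∈ Ω then lam else 0)) * (Vstar s' - Vtstar s')))
            ≤ γ * max M 0 := by
          intro a
          have step : ∀ s', P s a s' *
              (γ * (if s ∈ Ω ∧ s' ∈ Ω then lam else 0) * (Vstar s' - h s')
                + γ * (1 - (if s ∈ Ω ∧ s' ∈ Ω then lam else 0)) * (Vstar s' - Vtstar s'))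
              ≤ P s a s' * (γ * max M 0) := by
            intro s'
            refine mul_le_mul_of_nonneg_left ?_ (hPnn s a s')
            have e1 : γ * (if s ∈ Ω ∧ s' ∈ Ω then lam else 0) * (Vstar s' - h s') = 0 := by
              split_ifs with hc
              · rw [hLh s' hc.2, sub_self, mul_zero]
              · rw [mul_zero, zero_mul]
            have hDM : Vstar s' - Vtstar s' ≤ max M 0 :=
              le_trans (Finset.le_sup' (fun s => Vstar s - Vtstar s)
                (Finset.mem_univ s')) (le_max_left _ _)
            have e2 : γ * (1 - (if s ∈ Ω ∧ s' ∈ Ω then lam else 0)) * (Vstar s' - Vtstar s')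
                ≤ γ * (1 - (if s ∈ Ω ∧ s' ∈ Ω then lam else 0)) * max M 0 :=
              mul_le_mul_of_nonneg_left hDM
                (mul_nonneg hγ0 (by linarith [hL1 s s']))
            have e3 : γ * (1 - (if s ∈ Ω ∧ s' ∈ Ω then lam else 0)) * max M 0
                ≤ γ * max M 0 := by
              nlinarith [hL0 s s', mul_nonneg hγ0 (hL0 s s'),
                mul_nonneg (mul_nonneg hγ0 (hL0 s s')) (le_max_right M 0)]
            linarith
          calc (∑ s', P s a s' * _) ≤ ∑ s', P s a s' * (γ * max M 0) :=
                Finset.sum_le_sum fun s' _ => step s'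
            _ = γ * max M 0 := by rw [← Finset.sum_mul, hPsum, one_mul]
        calc (∑ a, πstar s a * _) ≤ ∑ a, πstar s a * (γ * max M 0) :=
              Finset.sum_le_sum fun a _ => mul_le_mul_of_nonneg_left (hinner a) (hπnn s a)
          _ = γ * max M 0 := by rw [← Finset.sum_mul, hπsum, one_mul]
      intro s
      linarith [key s]
    have hVeq' : ∀ s', Vtstar s' = Vstar s' := fun s' =>
      le_antisymm (hdom s') (hrev s')
    have hzero : ∀ t, (∑ s, ∑ a, ∑ s', ρ t s * πstar s a * P s a s' *
        ((if s ∈ Ω ∧ s' ∈ Ω then lam else 0) * (Vtstar s' - h s'))) = 0 := by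
      intro t
      refine Finset.sum_eq_zero fun s _ => Finset.sum_eq_zero fun a _ =>
        Finset.sum_eq_zero fun s' _ => ?_
      split_ifs with hc
      · rw [hVeq' s', hLh s' hc.2, sub_self, mul_zero, mul_zero]
      · rw [zero_mul, mul_zero]
    simp only [hzero, mul_zero, tsum_zero, zero_div]
end

section
/- Sandwich for the reshaped optimal value with behavior-policy heuristic: In a finite MDP with constant λ ∈ [0,1], if h = V^μ for a behavior policy μ (so V^μ ≤ V* pointwise), then the reshaped value of the optimal policy satisfies, for all s: Ṽ^{π*}(s) ≥ V*(s) − (γλ/(1−γ(1−λ))) ‖V* − V^μ‖_∞ and Ṽ^{π*}(s) ≤ V*(s). Hence ‖V* − Ṽ^{π*}‖_∞ ≤ (γλ/(1−γ(1−λ))) ‖V* − V^μ‖_∞. -/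
lemma hubl_wavg_le {ι : Type*} [Fintype ι] (w f : ι → ℝ) (C : ℝ)
    (hw : ∀ i, 0 ≤ w i) (hs : ∑ i, w i = 1) (hf : ∀ i, f i ≤ C) :
    ∑ i, w i * f i ≤ C := by
  calc ∑ i, w i * f i ≤ ∑ i, w i * C :=
        Finset.sum_le_sum (fun i _ => mul_le_mul_of_nonneg_left (hf i) (hw i))
    _ = C := by rw [← Finset.sum_mul, hs, one_mul]

lemma hubl_le_wavg {ι : Type*} [Fintype ι] (w f : ι → ℝ) (c : ℝ)
    (hw : ∀ i, 0 ≤ w i) (hs : ∑ i, w i = 1) (hf : ∀ i, c ≤ f i) :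
    c ≤ ∑ i, w i * f i := by
  calc c = ∑ i, w i * c := by rw [← Finset.sum_mul, hs, one_mul]
    _ ≤ ∑ i, w i * f i :=
        Finset.sum_le_sum (fun i _ => mul_le_mul_of_nonneg_left (hf i) (hw i))

/-- Sandwich for the reshaped optimal value with the
behavior-policy heuristic.  Constant `λ ∈ [0,1]`, `h = V^μ ≤ V*` pointwise.
Then for all `s`:
`V*(s) − (γλ/(1−γ(1−λ)))‖V*−V^μ‖_∞ ≤ Ṽ^{π*}(s) ≤ V*(s)`, hence
`‖V* − Ṽ^{π*}‖_∞ ≤ (γλ/(1−γ(1−λ)))‖V*−V^μ‖_∞`. -/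
theorem hubl_reshaped_value_sandwich
    {S A : Type*} [Fintype S] [Fintype A] [Nonempty S]
    (P : S → A → S → ℝ) (r : S → A → ℝ)
    (γ : ℝ) (hγ0 : 0 ≤ γ) (hγ1 : γ < 1)
    (lam : ℝ) (hlam : lam ∈ Set.Icc (0 : ℝ) 1)
    (hγlam : γ * (1 - lam) < 1)
    (πstar : S → A → ℝ) (hπnn : ∀ s a, 0 ≤ πstar s a)
    (hπsum : ∀ s, ∑ a, πstar s a = 1)
    (hPnn : ∀ s a s', 0 ≤ P s a s') (hPsum : ∀ s a, ∑ s', P s a s' = 1)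
    (Vstar Vμ Vtstar : S → ℝ)
    (hVstar : ∀ s, Vstar s = ∑ a, πstar s a *
      (r s a + γ * ∑ s', P s a s' * Vstar s'))
    (hμle : ∀ s, Vμ s ≤ Vstar s)
    -- reshaped value of π* with heuristic h = V^μ
    (hVtstar : ∀ s, Vtstar s = ∑ a, πstar s a * ∑ s', P s a s' *
      (r s a + γ * lam * Vμ s' + γ * (1 - lam) * Vtstar s')) :
    (∀ s, Vstar s - (γ * lam / (1 - γ * (1 - lam))) *
        Finset.univ.sup' Finset.univ_nonempty (fun s' => |Vstar s' - Vμ s'|)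
        ≤ Vtstar s)
    ∧ (∀ s, Vtstar s ≤ Vstar s)
    ∧ (∀ s, |Vstar s - Vtstar s| ≤ (γ * lam / (1 - γ * (1 - lam))) *
        Finset.univ.sup' Finset.univ_nonempty (fun s' => |Vstar s' - Vμ s'|))
    := by
  obtain ⟨hlam0, hlam1⟩ := hlam
  set M : ℝ := Finset.univ.sup' Finset.univ_nonempty (fun s' => |Vstar s' - Vμ s'|)
    with hMdef
  set D : S → ℝ := fun s => Vstar s - Vtstar s with hDdef
  have hgl_nn : 0 ≤ γ * lam := mul_nonneg hγ0 hlam0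
  have hgl1_nn : 0 ≤ γ * (1 - lam) := mul_nonneg hγ0 (by linarith)
  have hden : 0 < 1 - γ * (1 - lam) := by linarith
  have hMs : ∀ s, Vstar s - Vμ s ≤ M := by
    intro s
    rw [hMdef]
    exact (le_abs_self _).trans
      (Finset.le_sup' (fun s' => |Vstar s' - Vμ s'|) (Finset.mem_univ s))
  -- key recursion
  have key : ∀ s, D s = ∑ a, πstar s a * ∑ s', P s a s' *
      (γ * lam * (Vstar s' - Vμ s') + γ * (1 - lam) * D s') := by
    intro s
    have hds : D s = Vstar s - Vtstar s := rfl
    rw [hds, hVstar s, hVtstar s, ← Finset.sum_sub_distrib]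
    refine Finset.sum_congr rfl (fun a _ => ?_)
    rw [← mul_sub]
    congr 1
    have hr : r s a = ∑ s', P s a s' * r s a := by
      rw [← Finset.sum_mul, hPsum, one_mul]
    calc r s a + γ * ∑ s', P s a s' * Vstar s'
          - ∑ s', P s a s' * (r s a + γ * lam * Vμ s' + γ * (1 - lam) * Vtstar s')
        = ∑ s', (P s a s' * r s a + γ * (P s a s' * Vstar s')
            - P s a s' * (r s a + γ * lam * Vμ s' + γ * (1 - lam) * Vtstar s')) := by
          rw [Finset.sum_sub_distrib, Finset.sum_add_distrib, ← Finset.mul_sum, ← hr]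
      _ = ∑ s', P s a s' * (γ * lam * (Vstar s' - Vμ s') + γ * (1 - lam) * D s') := by
          refine Finset.sum_congr rfl (fun s' _ => ?_)
          simp only [hDdef]
          ring
  -- lower bound: min of D is nonneg
  obtain ⟨s0, _, hs0⟩ := Finset.exists_min_image Finset.univ D Finset.univ_nonempty
  have hs0' : ∀ s, D s0 ≤ D s := fun s => hs0 s (Finset.mem_univ s)
  have hmin : γ * (1 - lam) * D s0 ≤ D s0 := by
    nth_rewrite 2 [key s0]
    refine hubl_le_wavg _ _ _ (hπnn s0) (hπsum s0) (fun a => ?_)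
    refine hubl_le_wavg _ _ _ (hPnn s0 a) (hPsum s0 a) (fun s' => ?_)
    have h1 : 0 ≤ γ * lam * (Vstar s' - Vμ s') :=
      mul_nonneg hgl_nn (by linarith [hμle s'])
    have h2 : γ * (1 - lam) * D s0 ≤ γ * (1 - lam) * D s' :=
      mul_le_mul_of_nonneg_left (hs0' s') hgl1_nn
    linarith
  have hD0 : ∀ s, 0 ≤ D s := by
    intro s
    have : 0 ≤ D s0 := by nlinarith
    linarith [hs0' s]
  -- upper bound: max of D
  obtain ⟨s1, _, hs1⟩ := Finset.exists_max_image Finset.univ D Finset.univ_nonempty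
  have hs1' : ∀ s, D s ≤ D s1 := fun s => hs1 s (Finset.mem_univ s)
  have hmax : D s1 ≤ γ * lam * M + γ * (1 - lam) * D s1 := by
    nth_rewrite 1 [key s1]
    refine hubl_wavg_le _ _ _ (hπnn s1) (hπsum s1) (fun a => ?_)
    refine hubl_wavg_le _ _ _ (hPnn s1 a) (hPsum s1 a) (fun s' => ?_)
    have h1 : γ * lam * (Vstar s' - Vμ s') ≤ γ * lam * M :=
      mul_le_mul_of_nonneg_left (hMs s') hgl_nn
    have h2 : γ * (1 - lam) * D s' ≤ γ * (1 - lam) * D s1 :=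
      mul_le_mul_of_nonneg_left (hs1' s') hgl1_nn
    linarith
  have hNle : D s1 ≤ (γ * lam / (1 - γ * (1 - lam))) * M := by
    rw [div_mul_eq_mul_div, le_div_iff₀ hden]
    nlinarith
  have hDle : ∀ s, D s ≤ (γ * lam / (1 - γ * (1 - lam))) * M :=
    fun s => (hs1' s).trans hNle
  have hds : ∀ s, D s = Vstar s - Vtstar s := fun s => rfl
  refine ⟨fun s => ?_, fun s => ?_, fun s => ?_⟩
  · have h := hDle s; rw [hds s] at h; linarith
  · have h := hD0 s; rw [hds s] at h; linarith
  · rw [← hds s, abs_of_nonneg (hD0 s)]; exact hDle s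
end
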